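/- Let ρ1 ∈ D_{n1} and ρ2 ∈ D_{n2} be density matrices. For every integer k with max{rank(ρ1), rank(ρ2)} ≤ k ≤ rank(ρ1)·rank(ρ2), there exists ρ ∈ S(ρ1,ρ2) with rank(ρ) = k. -/

import Mathlib

open Matrix Kronecker Finset
open scoped ComplexOrder

/-- Partial trace over the first subsystem: `tr_1(ρ) = Σ_j ρ_{jj} ∈ M_{n2}`. -/
noncomputable def trace1 {n1 n2 : ℕ} (ρ : Matrix (Fin n1 × Fin n2) (Fin n1 × Fin n2) ℂ) :
    Matrix (Fin n2) (Fin n2) ℂ :=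
  Matrix.of fun i j => ∑ k : Fin n1, ρ (k, i) (k, j)

/-- Partial trace over the second subsystem: `tr_2(ρ) = (tr ρ_{ij})_{ij} ∈ M_{n1}`. -/
noncomputable def trace2 {n1 n2 : ℕ} (ρ : Matrix (Fin n1 × Fin n2) (Fin n1 × Fin n2) ℂ) :
    Matrix (Fin n1) (Fin n1) ℂ :=
  Matrix.of fun i j => ∑ k : Fin n2, ρ (i, k) (j, k)

/-! ### Auxiliary lemmas -/

private lemma exists_good_fun (r1 r2 k : ℕ) (hk1 : max r1 r2 ≤ k) (hk2 : k ≤ r1 * r2) :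
    ∃ g : Fin r1 × Fin r2 → Fin k, Function.Surjective g ∧
      ∀ x y, g x = g y → x = y ∨ (x.1 ≠ y.1 ∧ x.2 ≠ y.2) := by
  rcases Nat.eq_zero_or_pos r1 with hr1 | hr1
  · subst hr1
    have hk0 : k = 0 := by omega
    subst hk0
    exact ⟨fun x => x.1.elim0, fun t => t.elim0, fun x => x.1.elim0⟩
  rcases Nat.eq_zero_or_pos r2 with hr2 | hr2
  · subst hr2
    have hk0 : k = 0 := by omega
    subst hk0
    exact ⟨fun x => x.2.elim0, fun t => t.elim0, fun x => x.2.elim0⟩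
  have hmpos : 0 < max r1 r2 := lt_of_lt_of_le hr1 (le_max_left _ _)
  have H : ∀ K, max r1 r2 ≤ K → K ≤ r1 * r2 →
      ∃ g : Fin r1 × Fin r2 → Fin K, Function.Surjective g ∧
        ∀ x y, g x = g y → x = y ∨ (x.1 ≠ y.1 ∧ x.2 ≠ y.2) := by
    intro K hK
    induction K, hK using Nat.le_induction with
    | base =>
      intro _
      refine ⟨fun x => ⟨((x.1 : ℕ) + (x.2 : ℕ)) % (max r1 r2), Nat.mod_lt _ hmpos⟩, ?_, ?_⟩
      · intro t
        rcases max_choice r1 r2 with h | h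
        · refine ⟨(⟨(t : ℕ), by omega⟩, ⟨0, hr2⟩), ?_⟩
          ext
          simp [Nat.mod_eq_of_lt t.isLt]
        · refine ⟨(⟨0, hr1⟩, ⟨(t : ℕ), by omega⟩), ?_⟩
          ext
          simp [Nat.mod_eq_of_lt t.isLt]
      · rintro ⟨x1, x2⟩ ⟨y1, y2⟩ hxy
        simp only [Fin.mk.injEq] at hxy
        by_cases h1 : x1 = y1
        · by_cases h2 : x2 = y2
          · left; rw [h1, h2]
          · exfalso
            apply h2
            subst h1
            have hmod : (x2 : ℕ) ≡ (y2 : ℕ) [MOD max r1 r2] :=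
              Nat.ModEq.add_left_cancel' (x1 : ℕ) hxy
            have : (x2 : ℕ) = (y2 : ℕ) := by
              have h2' := hmod
              unfold Nat.ModEq at h2'
              rw [Nat.mod_eq_of_lt (by omega : (x2 : ℕ) < max r1 r2),
                Nat.mod_eq_of_lt (by omega : (y2 : ℕ) < max r1 r2)] at h2'
              exact h2'
            exact Fin.ext this
        · by_cases h2 : x2 = y2
          · exfalso
            apply h1
            subst h2
            have hmod : (x1 : ℕ) ≡ (y1 : ℕ) [MOD max r1 r2] :=
              Nat.ModEq.add_right_cancel' (x2 : ℕ) hxy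
            have : (x1 : ℕ) = (y1 : ℕ) := by
              unfold Nat.ModEq at hmod
              rw [Nat.mod_eq_of_lt (by omega : (x1 : ℕ) < max r1 r2),
                Nat.mod_eq_of_lt (by omega : (y1 : ℕ) < max r1 r2)] at hmod
              exact hmod
            exact Fin.ext this
          · right; exact ⟨h1, h2⟩
    | succ n hn ih =>
      intro hle
      obtain ⟨g, hs, hf⟩ := ih (by omega)
      have hcard : Fintype.card (Fin n) < Fintype.card (Fin r1 × Fin r2) := by
        simp only [Fintype.card_fin, Fintype.card_prod]
        omega
      obtain ⟨x, y, hne, heq⟩ := Fintype.exists_ne_map_eq_of_card_lt g hcard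
      classical
      refine ⟨fun z => if z = x then Fin.last n else (g z).castSucc, ?_, ?_⟩
      · intro c
        refine Fin.lastCases ?_ ?_ c
        · exact ⟨x, by simp⟩
        · intro c'
          obtain ⟨z, hz⟩ := hs c'
          by_cases hzx : z = x
          · refine ⟨y, ?_⟩
            have hgy : g y = c' := by rw [← heq, ← hzx]; exact hz
            have hyx : y ≠ x := Ne.symm hne
            simp only [if_neg hyx, hgy]
          · exact ⟨z, by simp [hzx, hz]⟩
      · intro a b hab
        dsimp only at hab
        by_cases ha : a = x <;> by_cases hb : b = x
        · left; rw [ha, hb]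
        · exfalso
          rw [if_pos ha, if_neg hb] at hab
          exact (Fin.castSucc_lt_last (g b)).ne' hab
        · exfalso
          rw [if_neg ha, if_pos hb] at hab
          exact (Fin.castSucc_lt_last (g a)).ne hab
        · have : g a = g b := by
            rw [if_neg ha, if_neg hb] at hab
            exact Fin.castSucc_inj.mp hab
          exact hf a b this
  exact H k hk1 hk2

private lemma ofReal_bridge (r : ℝ) : (RCLike.ofReal r : ℂ) = (r : ℂ) := rfl

private lemma sum_ite_mul_sum_ite {X Y : Type*} [Fintype X] [Fintype Y]
    (P : X → Prop) (Q : Y → Prop) [DecidablePred P] [DecidablePred Q]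
    (Φ : X → ℂ) (Ψ : Y → ℂ) :
    (∑ x, if P x then Φ x else 0) * (∑ y, if Q y then Ψ y else 0)
      = ∑ x, ∑ y, if P x ∧ Q y then Φ x * Ψ y else 0 := by
  rw [Finset.sum_mul_sum]
  refine Finset.sum_congr rfl fun x _ => Finset.sum_congr rfl fun y _ => ?_
  by_cases h1 : P x <;> by_cases h2 : Q y <;> simp [h1, h2]

private lemma conj_sum_ite {X : Type*} [Fintype X] (P : X → Prop) [DecidablePred P]
    (Φ : X → ℂ) :
    (starRingEnd ℂ) (∑ x, if P x then Φ x else 0)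
      = ∑ x, if P x then (starRingEnd ℂ) (Φ x) else 0 := by
  rw [map_sum]
  exact Finset.sum_congr rfl fun x _ => by rw [apply_ite (starRingEnd ℂ), map_zero]

private lemma tcollapse {k : ℕ} (s t : Fin k) (c : ℂ) :
    ∑ u : Fin k, (if s = u ∧ t = u then c else 0) = if s = t then c else 0 := by
  by_cases h : s = t
  · rw [if_pos h]
    rw [Finset.sum_eq_single s]
    · rw [if_pos ⟨rfl, h.symm⟩]
    · intro u _ hu
      rw [if_neg]
      rintro ⟨h1, -⟩
      exact hu h1.symm
    · intro h; exact absurd (Finset.mem_univ s) h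
  · rw [if_neg h]
    apply Finset.sum_eq_zero
    intro u _
    rw [if_neg]
    rintro ⟨h1, h2⟩
    exact h (h1.trans h2.symm)

private lemma col_orth {N : ℕ} (W : Matrix (Fin N) (Fin N) ℂ)
    (hW : star W * W = 1) (i j : Fin N) :
    ∑ a, (starRingEnd ℂ) (W a i) * W a j = if i = j then 1 else 0 := by
  have h := Matrix.ext_iff.mpr hW i j
  rw [Matrix.mul_apply, Matrix.one_apply] at h
  rw [← h]
  refine Finset.sum_congr rfl fun a _ => ?_
  rw [Matrix.star_apply, starRingEnd_apply]

private lemma col_orth' {N : ℕ} (W : Matrix (Fin N) (Fin N) ℂ)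
    (hW : star W * W = 1) (i j : Fin N) :
    ∑ a, W a i * (starRingEnd ℂ) (W a j) = if i = j then 1 else 0 := by
  have h := congrArg (starRingEnd ℂ) (col_orth W hW i j)
  rw [map_sum] at h
  simpa [_root_.map_mul, Complex.conj_conj, mul_comm, apply_ite (starRingEnd ℂ)] using h

private lemma sum_subtype_of_ne_zero {N : ℕ} (r : Fin N → ℝ) (F : Fin N → ℂ)
    (h : ∀ i, r i = 0 → F i = 0) : ∑ i : {i // r i ≠ 0}, F i = ∑ i, F i := by
  classical
  rw [← Fintype.sum_subtype_add_sum_subtype (fun i => r i ≠ 0) F]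
  have h2 : ∑ i : {i : Fin N // ¬ r i ≠ 0}, F i = 0 :=
    Finset.sum_eq_zero (fun i _ => h i (not_not.mp i.2))
  rw [h2, add_zero]

private lemma split_sum {S T : Type*} [Fintype S] [Fintype T]
    (pc : S → ℂ) (qc : T → ℂ) (X : S → ℂ) :
    ∑ x : S × T, (pc x.1 * qc x.2) * X x.1 = (∑ j : T, qc j) * ∑ i : S, pc i * X i := by
  rw [Fintype.sum_prod_type, Finset.sum_mul_sum, Finset.sum_comm]
  exact Finset.sum_congr rfl fun i _ => Finset.sum_congr rfl fun j _ => by ring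

/-- Gram matrix computation. -/
private lemma gram_calc {N M k : ℕ} {S T : Type*} [Fintype S] [Fintype T]
    (U : Matrix (Fin N) (Fin N) ℂ) (V : Matrix (Fin M) (Fin M) ℂ)
    (ι1 : S → Fin N) (ι2 : T → Fin M)
    (hι1 : Function.Injective ι1) (hι2 : Function.Injective ι2)
    (hU : ∀ i j : Fin N, ∑ a, (starRingEnd ℂ) (U a i) * U a j = if i = j then 1 else 0)
    (hV : ∀ i j : Fin M, ∑ b, (starRingEnd ℂ) (V b i) * V b j = if i = j then 1 else 0)
    (w : S × T → ℝ) (f : S × T → Fin k) (s t : Fin k) :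
    ∑ z : Fin N × Fin M,
      ((starRingEnd ℂ) (∑ x : S × T, if f x = s then (w x : ℂ) * (U z.1 (ι1 x.1) * V z.2 (ι2 x.2)) else 0)
        * (∑ y : S × T, if f y = t then (w y : ℂ) * (U z.1 (ι1 y.1) * V z.2 (ι2 y.2)) else 0))
      = if s = t then (∑ x : S × T, if f x = s then ((w x : ℂ) * (w x : ℂ)) else 0) else 0 := by
  classical
  have hterm : ∀ z : Fin N × Fin M,
      ((starRingEnd ℂ) (∑ x : S × T, if f x = s then (w x : ℂ) * (U z.1 (ι1 x.1) * V z.2 (ι2 x.2)) else 0)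
        * (∑ y : S × T, if f y = t then (w y : ℂ) * (U z.1 (ι1 y.1) * V z.2 (ι2 y.2)) else 0))
      = ∑ x : S × T, ∑ y : S × T, (if f x = s ∧ f y = t then
          ((w x : ℂ) * (w y : ℂ)) *
            (((starRingEnd ℂ) (U z.1 (ι1 x.1)) * U z.1 (ι1 y.1)) *
              ((starRingEnd ℂ) (V z.2 (ι2 x.2)) * V z.2 (ι2 y.2))) else 0) := by
    intro z
    rw [conj_sum_ite, sum_ite_mul_sum_ite]
    refine Finset.sum_congr rfl fun x _ => Finset.sum_congr rfl fun y _ => ?_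
    by_cases h : f x = s ∧ f y = t
    · rw [if_pos h, if_pos h]
      simp only [_root_.map_mul, Complex.conj_ofReal]
      ring
    · rw [if_neg h, if_neg h]
  rw [Finset.sum_congr rfl fun z _ => hterm z]
  rw [Fintype.sum_prod_type]
  have reorder : ∀ (F : Fin N → Fin M → (S × T) → (S × T) → ℂ),
      ∑ z1, ∑ z2, ∑ x, ∑ y, F z1 z2 x y = ∑ x, ∑ y, ∑ z1, ∑ z2, F z1 z2 x y := by
    intro F
    calc ∑ z1, ∑ z2, ∑ x, ∑ y, F z1 z2 x y
        = ∑ z1, ∑ x, ∑ z2, ∑ y, F z1 z2 x y :=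
          Finset.sum_congr rfl fun z1 _ => Finset.sum_comm
      _ = ∑ x, ∑ z1, ∑ z2, ∑ y, F z1 z2 x y := Finset.sum_comm
      _ = ∑ x, ∑ z1, ∑ y, ∑ z2, F z1 z2 x y :=
          Finset.sum_congr rfl fun x _ => Finset.sum_congr rfl fun z1 _ => Finset.sum_comm
      _ = ∑ x, ∑ y, ∑ z1, ∑ z2, F z1 z2 x y :=
          Finset.sum_congr rfl fun x _ => Finset.sum_comm
  rw [reorder]
  have inner : ∀ x y : S × T,
      ∑ z1 : Fin N, ∑ z2 : Fin M, (if f x = s ∧ f y = t then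
          ((w x : ℂ) * (w y : ℂ)) *
            (((starRingEnd ℂ) (U z1 (ι1 x.1)) * U z1 (ι1 y.1)) *
              ((starRingEnd ℂ) (V z2 (ι2 x.2)) * V z2 (ι2 y.2))) else 0)
      = if f x = s ∧ f y = t then
          ((w x : ℂ) * (w y : ℂ)) *
            ((if ι1 x.1 = ι1 y.1 then (1:ℂ) else 0) * (if ι2 x.2 = ι2 y.2 then (1:ℂ) else 0))
        else 0 := by
    intro x y
    by_cases h : f x = s ∧ f y = t
    · simp only [if_pos h]
      rw [← hU (ι1 x.1) (ι1 y.1), ← hV (ι2 x.2) (ι2 y.2)]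
      rw [Finset.sum_mul_sum, Finset.mul_sum]
      exact Finset.sum_congr rfl fun z1 _ => by rw [Finset.mul_sum]
    · simp only [if_neg h, Finset.sum_const_zero]
  rw [Finset.sum_congr rfl fun x _ => Finset.sum_congr rfl fun y _ => inner x y]
  have ycollapse : ∀ x : S × T,
      ∑ y : S × T, (if f x = s ∧ f y = t then
          ((w x : ℂ) * (w y : ℂ)) *
            ((if ι1 x.1 = ι1 y.1 then (1:ℂ) else 0) * (if ι2 x.2 = ι2 y.2 then (1:ℂ) else 0))
        else 0)
      = if f x = s ∧ f x = t then ((w x : ℂ) * (w x : ℂ)) else 0 := by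
    intro x
    rw [Finset.sum_eq_single x]
    · by_cases h : f x = s ∧ f x = t
      · rw [if_pos h, if_pos h, if_pos rfl, if_pos rfl, mul_one, mul_one]
      · rw [if_neg h, if_neg h]
    · intro y _ hyx
      by_cases h : f x = s ∧ f y = t
      · rw [if_pos h]
        have : ¬ (ι1 x.1 = ι1 y.1 ∧ ι2 x.2 = ι2 y.2) := by
          rintro ⟨h1, h2⟩
          exact hyx (Prod.ext (hι1 h1) (hι2 h2)).symm
        rcases not_and_or.mp this with h' | h'
        · rw [if_neg h', zero_mul, mul_zero]
        · rw [if_neg h', mul_zero, mul_zero]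
      · rw [if_neg h]
    · intro h; exact absurd (Finset.mem_univ x) h
  rw [Finset.sum_congr rfl fun x _ => ycollapse x]
  by_cases hst : s = t
  · subst hst
    rw [if_pos rfl]
    exact Finset.sum_congr rfl fun x _ => by by_cases h : f x = s <;> simp [h]
  · rw [if_neg hst]
    apply Finset.sum_eq_zero
    intro x _
    rw [if_neg]
    rintro ⟨h1, h2⟩
    exact hst (h1.symm.trans h2)

/-- Partial-trace collapse computation. -/
private lemma marginal_calc {N M k : ℕ} {S T : Type*} [Fintype S] [Fintype T]
    (U : Matrix (Fin N) (Fin N) ℂ) (V : Matrix (Fin M) (Fin M) ℂ)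
    (ι1 : S → Fin N) (ι2 : T → Fin M) (hι2 : Function.Injective ι2)
    (hV : ∀ i j : Fin M, ∑ b, V b i * (starRingEnd ℂ) (V b j) = if i = j then 1 else 0)
    (w : S × T → ℝ) (f : S × T → Fin k)
    (hf : ∀ x y, f x = f y → x = y ∨ (x.1 ≠ y.1 ∧ x.2 ≠ y.2))
    (a a' : Fin N) :
    ∑ b : Fin M, ∑ t : Fin k,
      ((∑ x : S × T, if f x = t then (w x : ℂ) * (U a (ι1 x.1) * V b (ι2 x.2)) else 0) *
        (starRingEnd ℂ) (∑ y : S × T, if f y = t then (w y : ℂ) * (U a' (ι1 y.1) * V b (ι2 y.2)) else 0))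
    = ∑ x : S × T, ((w x : ℂ) * (w x : ℂ)) * (U a (ι1 x.1) * (starRingEnd ℂ) (U a' (ι1 x.1))) := by
  classical
  have hterm : ∀ (b : Fin M) (t : Fin k),
      ((∑ x : S × T, if f x = t then (w x : ℂ) * (U a (ι1 x.1) * V b (ι2 x.2)) else 0) *
        (starRingEnd ℂ) (∑ y : S × T, if f y = t then (w y : ℂ) * (U a' (ι1 y.1) * V b (ι2 y.2)) else 0))
      = ∑ x : S × T, ∑ y : S × T, (if f x = t ∧ f y = t then
          (((w x : ℂ) * (w y : ℂ)) * (U a (ι1 x.1) * (starRingEnd ℂ) (U a' (ι1 y.1)))) *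
            (V b (ι2 x.2) * (starRingEnd ℂ) (V b (ι2 y.2))) else 0) := by
    intro b t
    rw [conj_sum_ite, sum_ite_mul_sum_ite]
    refine Finset.sum_congr rfl fun x _ => Finset.sum_congr rfl fun y _ => ?_
    by_cases h : f x = t ∧ f y = t
    · rw [if_pos h, if_pos h]
      simp only [_root_.map_mul, Complex.conj_ofReal]
      ring
    · rw [if_neg h, if_neg h]
  rw [Finset.sum_congr rfl fun b _ =>
    Finset.sum_congr rfl fun t _ => hterm b t]
  have reorder : ∀ (F : Fin M → Fin k → (S × T) → (S × T) → ℂ),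
      ∑ b, ∑ t, ∑ x, ∑ y, F b t x y = ∑ x, ∑ y, ∑ t, ∑ b, F b t x y := by
    intro F
    calc ∑ b, ∑ t, ∑ x, ∑ y, F b t x y
        = ∑ b, ∑ x, ∑ t, ∑ y, F b t x y :=
          Finset.sum_congr rfl fun b _ => Finset.sum_comm
      _ = ∑ x, ∑ b, ∑ t, ∑ y, F b t x y := Finset.sum_comm
      _ = ∑ x, ∑ b, ∑ y, ∑ t, F b t x y :=
          Finset.sum_congr rfl fun x _ => Finset.sum_congr rfl fun b _ => Finset.sum_comm
      _ = ∑ x, ∑ y, ∑ b, ∑ t, F b t x y :=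
          Finset.sum_congr rfl fun x _ => Finset.sum_comm
      _ = ∑ x, ∑ y, ∑ t, ∑ b, F b t x y :=
          Finset.sum_congr rfl fun x _ => Finset.sum_congr rfl fun y _ => Finset.sum_comm
  rw [reorder]
  have inner : ∀ x y : S × T,
      ∑ t : Fin k, ∑ b : Fin M, (if f x = t ∧ f y = t then
          (((w x : ℂ) * (w y : ℂ)) * (U a (ι1 x.1) * (starRingEnd ℂ) (U a' (ι1 y.1)))) *
            (V b (ι2 x.2) * (starRingEnd ℂ) (V b (ι2 y.2))) else 0)
      = if f x = f y then
          (((w x : ℂ) * (w y : ℂ)) * (U a (ι1 x.1) * (starRingEnd ℂ) (U a' (ι1 y.1)))) *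
            (if ι2 x.2 = ι2 y.2 then (1:ℂ) else 0) else 0 := by
    intro x y
    have hb : ∀ t : Fin k, ∑ b : Fin M, (if f x = t ∧ f y = t then
          (((w x : ℂ) * (w y : ℂ)) * (U a (ι1 x.1) * (starRingEnd ℂ) (U a' (ι1 y.1)))) *
            (V b (ι2 x.2) * (starRingEnd ℂ) (V b (ι2 y.2))) else 0)
        = if f x = t ∧ f y = t then
          (((w x : ℂ) * (w y : ℂ)) * (U a (ι1 x.1) * (starRingEnd ℂ) (U a' (ι1 y.1)))) *
            (if ι2 x.2 = ι2 y.2 then (1:ℂ) else 0) else 0 := by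
      intro t
      by_cases h : f x = t ∧ f y = t
      · simp only [if_pos h]
        rw [← Finset.mul_sum, hV]
      · simp only [if_neg h, Finset.sum_const_zero]
    rw [Finset.sum_congr rfl fun t _ => hb t]
    exact tcollapse (f x) (f y) _
  rw [Finset.sum_congr rfl fun x _ => Finset.sum_congr rfl fun y _ => inner x y]
  refine Finset.sum_congr rfl fun x _ => ?_
  rw [Finset.sum_eq_single x]
  · rw [if_pos rfl, if_pos rfl, mul_one]
  · intro y _ hyx
    by_cases h : f x = f y
    · rw [if_pos h]
      rcases hf x y h with h' | h'
      · exact absurd h'.symm hyx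
      · rw [if_neg (fun hc => h'.2 (hι2 hc)), mul_zero]
    · rw [if_neg h]
  · intro h; exact absurd (Finset.mem_univ x) h

/-- Spectral packaging of a PSD matrix with unit trace. -/
private lemma psd_package {N : ℕ} (ρ : Matrix (Fin N) (Fin N) ℂ) (hρ : ρ.PosSemidef)
    (htr : ρ.trace = 1) :
    ∃ (p : Fin N → ℝ) (U : Matrix (Fin N) (Fin N) ℂ),
      (∀ i, p i ≠ 0 → 0 < p i) ∧ ((∑ i, (p i : ℂ)) = 1) ∧
      (Fintype.card {i // p i ≠ 0} = ρ.rank) ∧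
      (∀ i j, ∑ a, (starRingEnd ℂ) (U a i) * U a j = if i = j then 1 else 0) ∧
      (∀ i j, ∑ a, U a i * (starRingEnd ℂ) (U a j) = if i = j then 1 else 0) ∧
      (∀ a a', ρ a a' = ∑ i, (p i : ℂ) * (U a i * (starRingEnd ℂ) (U a' i))) := by
  have h := hρ.1
  have hunit : star (h.eigenvectorUnitary : Matrix (Fin N) (Fin N) ℂ) *
      (h.eigenvectorUnitary : Matrix (Fin N) (Fin N) ℂ) = 1 :=
    Matrix.mem_unitaryGroup_iff'.mp h.eigenvectorUnitary.2
  refine ⟨h.eigenvalues, (h.eigenvectorUnitary : Matrix (Fin N) (Fin N) ℂ),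
    fun i hi => lt_of_le_of_ne (hρ.eigenvalues_nonneg i) (Ne.symm hi), ?_, ?_,
    col_orth _ hunit, col_orth' _ hunit, ?_⟩
  · have ht : ρ.trace = ∑ i, (h.eigenvalues i : ℂ) := by
      conv_lhs => rw [h.spectral_theorem]
      rw [Unitary.conjStarAlgAut_apply]
      rw [Matrix.trace_mul_cycle, hunit, one_mul, Matrix.trace_diagonal]
      simp only [Function.comp_apply, ofReal_bridge]
    rw [← ht, htr]
  · exact h.rank_eq_card_non_zero_eigs.symm
  · intro a a'
    conv_lhs => rw [h.spectral_theorem]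
    rw [Unitary.conjStarAlgAut_apply]
    rw [Matrix.mul_apply]
    refine Finset.sum_congr rfl fun i _ => ?_
    rw [Matrix.mul_diagonal, Matrix.star_apply, ← starRingEnd_apply]
    simp only [Function.comp_apply, ofReal_bridge]
    ring

/-- For any `k` with `max{rank ρ1, rank ρ2} ≤ k ≤ rank ρ1 · rank ρ2` there is a state
in `S(ρ1, ρ2)` of rank exactly `k`. -/
theorem stmt5 {n1 n2 : ℕ}
    (ρ1 : Matrix (Fin n1) (Fin n1) ℂ) (ρ2 : Matrix (Fin n2) (Fin n2) ℂ)
    (hρ1 : ρ1.PosSemidef) (hρ1tr : ρ1.trace = 1)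
    (hρ2 : ρ2.PosSemidef) (hρ2tr : ρ2.trace = 1)
    (k : ℕ) (hk1 : max ρ1.rank ρ2.rank ≤ k) (hk2 : k ≤ ρ1.rank * ρ2.rank) :
    ∃ ρ : Matrix (Fin n1 × Fin n2) (Fin n1 × Fin n2) ℂ,
      ρ.PosSemidef ∧ ρ.trace = 1 ∧ trace2 ρ = ρ1 ∧ trace1 ρ = ρ2 ∧ ρ.rank = k := by
  classical
  obtain ⟨p, U, hppos, hptr, hcard1, hUc, hUr, hspec1⟩ := psd_package ρ1 hρ1 hρ1tr
  obtain ⟨q, V, hqpos, hqtr, hcard2, hVc, hVr, hspec2⟩ := psd_package ρ2 hρ2 hρ2tr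
  obtain ⟨g, hgsurj, hgfib⟩ := exists_good_fun ρ1.rank ρ2.rank k hk1 hk2
  -- transport the combinatorial data to the nonzero-eigenvalue index sets
  obtain ⟨f, hfsurj, hffib⟩ : ∃ f : {i // p i ≠ 0} × {j // q j ≠ 0} → Fin k,
      Function.Surjective f ∧
        ∀ x y, f x = f y → x = y ∨ (x.1 ≠ y.1 ∧ x.2 ≠ y.2) := by
    have e1 := Fintype.equivFinOfCardEq hcard1
    have e2 := Fintype.equivFinOfCardEq hcard2
    refine ⟨fun x => g (e1 x.1, e2 x.2), ?_, ?_⟩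
    · intro t
      obtain ⟨z, hz⟩ := hgsurj t
      refine ⟨(e1.symm z.1, e2.symm z.2), ?_⟩
      simpa using hz
    · intro x y hxy
      rcases hgfib _ _ hxy with h | h
      · left
        have h1' : e1 x.1 = e1 y.1 := congrArg Prod.fst h
        have h2' : e2 x.2 = e2 y.2 := congrArg Prod.snd h
        exact Prod.ext (e1.injective h1') (e2.injective h2')
      · right
        exact ⟨fun hc => h.1 (congrArg e1 hc), fun hc => h.2 (congrArg e2 hc)⟩
  -- the weights
  obtain ⟨ω, hωpos, hw2⟩ : ∃ ω : {i // p i ≠ 0} × {j // q j ≠ 0} → ℝ,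
      (∀ x, 0 < ω x) ∧
        ∀ x, ((ω x : ℝ) : ℂ) * ((ω x : ℝ) : ℂ) = (p ↑x.1 : ℂ) * (q ↑x.2 : ℂ) := by
    refine ⟨fun x => Real.sqrt (p ↑x.1 * q ↑x.2),
      fun x => Real.sqrt_pos.mpr (mul_pos (hppos _ x.1.2) (hqpos _ x.2.2)), fun x => ?_⟩
    rw [← Complex.ofReal_mul,
      Real.mul_self_sqrt (le_of_lt (mul_pos (hppos _ x.1.2) (hqpos _ x.2.2))),
      Complex.ofReal_mul]
  set A : Matrix (Fin n1 × Fin n2) (Fin k) ℂ :=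
    Matrix.of (fun z t => ∑ x : {i // p i ≠ 0} × {j // q j ≠ 0},
      if f x = t then ((ω x : ℝ) : ℂ) * (U z.1 ↑x.1 * V z.2 ↑x.2) else 0) with hAdef
  -- the marginal over the second system
  have htrace2 : trace2 (A * Aᴴ) = ρ1 := by
    ext a a'
    show (∑ b, (A * Aᴴ) (a, b) (a', b)) = ρ1 a a'
    have hmul : ∀ b, (A * Aᴴ) (a, b) (a', b)
        = ∑ t, A (a, b) t * (starRingEnd ℂ) (A (a', b) t) := by
      intro b
      rw [Matrix.mul_apply]
      exact Finset.sum_congr rfl fun t _ => by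
        rw [Matrix.conjTranspose_apply, ← starRingEnd_apply]
    rw [Finset.sum_congr rfl fun b _ => hmul b]
    simp only [hAdef, Matrix.of_apply]
    rw [marginal_calc U V (fun i : {i // p i ≠ 0} => (i : Fin n1))
      (fun j : {j // q j ≠ 0} => (j : Fin n2)) Subtype.coe_injective hVr ω f hffib a a']
    have hconv : ∑ x : {i // p i ≠ 0} × {j // q j ≠ 0},
        ((ω x : ℝ) : ℂ) * ((ω x : ℝ) : ℂ) * (U a ↑x.1 * (starRingEnd ℂ) (U a' ↑x.1))
        = ∑ x : {i // p i ≠ 0} × {j // q j ≠ 0},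
          ((p ↑x.1 : ℂ) * (q ↑x.2 : ℂ)) * (U a ↑x.1 * (starRingEnd ℂ) (U a' ↑x.1)) :=
      Finset.sum_congr rfl fun x _ => by rw [hw2 x]
    rw [hconv]
    rw [split_sum (fun i : {i // p i ≠ 0} => (p ↑i : ℂ)) (fun j : {j // q j ≠ 0} => (q ↑j : ℂ))
      (fun i : {i // p i ≠ 0} => U a ↑i * (starRingEnd ℂ) (U a' ↑i))]
    rw [sum_subtype_of_ne_zero q (fun j => (q j : ℂ)) (fun j hj => by simp only [hj, Complex.ofReal_zero]),
      hqtr, one_mul]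
    rw [sum_subtype_of_ne_zero p (fun i => (p i : ℂ) * (U a i * (starRingEnd ℂ) (U a' i)))
      (fun i hi => by simp only [hi, Complex.ofReal_zero, zero_mul])]
    exact (hspec1 a a').symm
  -- the marginal over the first system
  have htrace1 : trace1 (A * Aᴴ) = ρ2 := by
    ext b b'
    show (∑ a, (A * Aᴴ) (a, b) (a, b')) = ρ2 b b'
    have hmul : ∀ a, (A * Aᴴ) (a, b) (a, b')
        = ∑ t, A (a, b) t * (starRingEnd ℂ) (A (a, b') t) := by
      intro a
      rw [Matrix.mul_apply]
      exact Finset.sum_congr rfl fun t _ => by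
        rw [Matrix.conjTranspose_apply, ← starRingEnd_apply]
    rw [Finset.sum_congr rfl fun a _ => hmul a]
    have hswap : ∀ (b0 : Fin n2) (a : Fin n1) (t : Fin k),
        A (a, b0) t = ∑ x : {j // q j ≠ 0} × {i // p i ≠ 0},
          if f (x.2, x.1) = t then ((ω (x.2, x.1) : ℝ) : ℂ) * (V b0 ↑x.1 * U a ↑x.2) else 0 := by
      intro b0 a t
      simp only [hAdef, Matrix.of_apply]
      refine Fintype.sum_equiv (Equiv.prodComm _ _) _ _ ?_
      rintro ⟨x1, x2⟩
      simp only [Equiv.prodComm_apply, Prod.swap_prod_mk]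
      by_cases h : f (x1, x2) = t
      · simp only [h, ↓reduceIte]
        ring
      · simp only [h, ↓reduceIte]
    rw [Finset.sum_congr rfl fun a _ => Finset.sum_congr rfl fun t _ => by
      rw [hswap b a t, hswap b' a t]]
    have hffib' : ∀ x y : {j // q j ≠ 0} × {i // p i ≠ 0},
        f (x.2, x.1) = f (y.2, y.1) → x = y ∨ (x.1 ≠ y.1 ∧ x.2 ≠ y.2) := by
      intro x y hxy
      rcases hffib _ _ hxy with h | h
      · left
        exact Prod.ext (congrArg Prod.snd h) (congrArg Prod.fst h)
      · right
        exact ⟨h.2, h.1⟩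
    rw [marginal_calc V U (fun j : {j // q j ≠ 0} => (j : Fin n2))
      (fun i : {i // p i ≠ 0} => (i : Fin n1)) Subtype.coe_injective hUr
      (fun x => ω (x.2, x.1)) (fun x => f (x.2, x.1)) hffib' b b']
    have hconv : ∑ x : {j // q j ≠ 0} × {i // p i ≠ 0},
        ((ω (x.2, x.1) : ℝ) : ℂ) * ((ω (x.2, x.1) : ℝ) : ℂ) *
          (V b ↑x.1 * (starRingEnd ℂ) (V b' ↑x.1))
        = ∑ x : {j // q j ≠ 0} × {i // p i ≠ 0},
          ((q ↑x.1 : ℂ) * (p ↑x.2 : ℂ)) * (V b ↑x.1 * (starRingEnd ℂ) (V b' ↑x.1)) := by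
      refine Finset.sum_congr rfl fun x _ => ?_
      have h := hw2 (x.2, x.1)
      dsimp only at h ⊢
      rw [h]
      ring
    rw [hconv]
    rw [split_sum (fun j : {j // q j ≠ 0} => (q ↑j : ℂ)) (fun i : {i // p i ≠ 0} => (p ↑i : ℂ))
      (fun j : {j // q j ≠ 0} => V b ↑j * (starRingEnd ℂ) (V b' ↑j))]
    rw [sum_subtype_of_ne_zero p (fun i => (p i : ℂ)) (fun i hi => by simp only [hi, Complex.ofReal_zero]),
      hptr, one_mul]
    rw [sum_subtype_of_ne_zero q (fun j => (q j : ℂ) * (V b j * (starRingEnd ℂ) (V b' j)))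
      (fun j hj => by simp only [hj, Complex.ofReal_zero, zero_mul])]
    exact (hspec2 b b').symm
  -- the trace
  have htr : (A * Aᴴ).trace = 1 := by
    have h1t : (A * Aᴴ).trace = ∑ z : Fin n1 × Fin n2, (A * Aᴴ) z z := by
      rw [Matrix.trace]
      exact Finset.sum_congr rfl fun z _ => rfl
    rw [h1t, Fintype.sum_prod_type]
    have hinner : ∀ a : Fin n1, (∑ b, (A * Aᴴ) (a, b) (a, b)) = ρ1 a a := by
      intro a
      exact Matrix.ext_iff.mpr htrace2 a a
    rw [Finset.sum_congr rfl fun a _ => hinner a]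
    have : ∑ a, ρ1 a a = ρ1.trace := by
      rw [Matrix.trace]
      exact Finset.sum_congr rfl fun a _ => rfl
    rw [this, hρ1tr]
  -- the Gram matrix and the rank
  have hGram : Aᴴ * A = Matrix.diagonal (fun t => ∑ x : {i // p i ≠ 0} × {j // q j ≠ 0},
      if f x = t then ((ω x : ℝ) : ℂ) * ((ω x : ℝ) : ℂ) else 0) := by
    ext s t
    have hmul : (Aᴴ * A) s t = ∑ z, (starRingEnd ℂ) (A z s) * A z t := by
      rw [Matrix.mul_apply]
      exact Finset.sum_congr rfl fun z _ => by
        rw [Matrix.conjTranspose_apply, ← starRingEnd_apply]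
    rw [hmul]
    simp only [hAdef, Matrix.of_apply]
    rw [gram_calc U V (fun i : {i // p i ≠ 0} => (i : Fin n1))
      (fun j : {j // q j ≠ 0} => (j : Fin n2)) Subtype.coe_injective Subtype.coe_injective
      hUc hVc ω f s t]
    rw [Matrix.diagonal_apply]
  have hν : ∀ t : Fin k, (∑ x : {i // p i ≠ 0} × {j // q j ≠ 0},
      if f x = t then ((ω x : ℝ) : ℂ) * ((ω x : ℝ) : ℂ) else 0) ≠ 0 := by
    intro t
    have hre : (∑ x : {i // p i ≠ 0} × {j // q j ≠ 0},
        if f x = t then ((ω x : ℝ) : ℂ) * ((ω x : ℝ) : ℂ) else 0)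
        = ((∑ x : {i // p i ≠ 0} × {j // q j ≠ 0},
            if f x = t then (ω x * ω x) else 0 : ℝ) : ℂ) := by
      rw [Complex.ofReal_sum]
      refine Finset.sum_congr rfl fun x _ => ?_
      by_cases h : f x = t
      · rw [if_pos h, if_pos h, Complex.ofReal_mul]
      · rw [if_neg h, if_neg h, Complex.ofReal_zero]
    rw [hre, Complex.ofReal_ne_zero]
    have hpos : 0 < ∑ x : {i // p i ≠ 0} × {j // q j ≠ 0},
        if f x = t then (ω x * ω x) else 0 := by
      obtain ⟨x0, hx0⟩ := hfsurj t
      refine Finset.sum_pos' (fun x _ => ?_) ⟨x0, Finset.mem_univ x0, ?_⟩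
      · by_cases h : f x = t
        · rw [if_pos h]; exact le_of_lt (mul_pos (hωpos x) (hωpos x))
        · rw [if_neg h]
      · rw [if_pos hx0]; exact mul_pos (hωpos x0) (hωpos x0)
    exact ne_of_gt hpos
  have hrank : (A * Aᴴ).rank = k := by
    rw [Matrix.rank_self_mul_conjTranspose, ← Matrix.rank_conjTranspose_mul_self, hGram,
      Matrix.rank_diagonal, Fintype.card_congr (Equiv.subtypeUnivEquiv hν), Fintype.card_fin]
  exact ⟨A * Aᴴ, Matrix.posSemidef_self_mul_conjTranspose A, htr, htrace2, htrace1, hrank⟩
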